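/- For every family of q-ary insertion-deletion codes with integer d = δq that can be uniquely decoded from a δ-fraction of deletions, the rate is at most (1-δ)(1 + log(1-δ)/log q) + o(1). Consequently, any such family achieving rate 1 - δ - ε must have alphabet size q ≥ exp((1-δ)·ln(1/(1-δ))/ε). -/

import Mathlib

variable {α : Type*}

/-- Insertion-deletion edit distance. -/
def ED [DecidableEq α] : List α → List α → ℕ
  | [], ys => ys.length
  | _ :: xs, [] => xs.length + 1
  | x :: xs, y :: ys =>
    if x = y then ED xs ys
    else 1 + min (ED (x :: xs) ys) (ED xs (y :: ys))
termination_by xs ys => xs.length + ys.length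
decreasing_by all_goals (simp; try omega)

/-- Length of longest common subsequence. -/
def LCSlen [DecidableEq α] : List α → List α → ℕ
  | [], _ => 0
  | _ :: _, [] => 0
  | x :: xs, y :: ys =>
    if x = y then 1 + LCSlen xs ys
    else max (LCSlen (x :: xs) ys) (LCSlen xs (y :: ys))
termination_by xs ys => xs.length + ys.length
decreasing_by all_goals (simp; try omega)

/-- substring S[i, j) of an (infinite) string -/
def sub (S : ℕ → α) (i j : ℕ) : List α := (List.range' i (j - i)).map S

def IsSyncString [DecidableEq α] (ε : ℝ) (n : ℕ) (S : ℕ → α) : Prop :=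
  ∀ i j k : ℕ, i < j → j < k → k ≤ n →
    (1 - ε) * ((k : ℝ) - i) < ED (sub S i j) (sub S j k)

def ReachableR (c y : List α) (D G : ℝ) : Prop :=
  ∃ z : List α, z.Sublist c ∧ z.Sublist y ∧
    (c.length : ℝ) - z.length ≤ D ∧ (y.length : ℝ) - z.length ≤ G


lemma sum_count_eq_countP' {β : Type*} [DecidableEq β] (T : Finset β) (c : List β) :
    ∑ t ∈ T, c.count t = c.countP (fun a => a ∈ T) := by
  induction c with
  | nil => simp
  | cons a c ih =>
    simp only [List.count_cons, List.countP_cons, Finset.sum_add_distrib, ih]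
    by_cases h : a ∈ T <;>
      simp [h, Finset.sum_ite_eq' T a (fun _ => 1)]

lemma length_filter_add_not {β : Type*} (p : β → Prop) [DecidablePred p] (l : List β) :
    (l.filter (fun a => p a)).length + (l.filter (fun a => ¬ p a)).length = l.length := by
  induction l with
  | nil => simp
  | cons a l ih => by_cases h : p a <;> simp [List.filter_cons, h, ← ih] <;> omega

lemma exists_minT {q : ℕ} (d : ℕ) (hd : d ≤ q) (c : List (Fin q)) :
    ∃ T : Finset (Fin q), T.card = d ∧ q * (∑ t ∈ T, c.count t) ≤ d * c.length := by
  have hne : (Finset.univ.powersetCard d (α := Fin q)).Nonempty := by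
    apply Finset.powersetCard_nonempty.2
    simpa using hd
  obtain ⟨T, hTmem, hTmin⟩ := Finset.exists_min_image _ (fun T => ∑ t ∈ T, c.count t) hne
  rw [Finset.mem_powersetCard_univ] at hTmem
  have hswap : ∀ t ∈ T, ∀ s ∉ T, c.count t ≤ c.count s := by
    intro t ht s hs
    have hd1 : 1 ≤ d := hTmem ▸ Finset.card_pos.2 ⟨t, ht⟩
    have hT' : insert s (T.erase t) ∈ Finset.univ.powersetCard d := by
      rw [Finset.mem_powersetCard_univ, Finset.card_insert_of_notMem (by simp [hs]),
        Finset.card_erase_of_mem ht, hTmem]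
      omega
    have h2 : ∑ x ∈ T, c.count x ≤ c.count s + ∑ x ∈ T.erase t, c.count x := by
      simpa [Finset.sum_insert (show s ∉ T.erase t by simp [hs])] using hTmin _ hT'
    have h3 : ∑ x ∈ T.erase t, c.count x + c.count t = ∑ x ∈ T, c.count x :=
      Finset.sum_erase_add T (fun x => c.count x) ht
    omega
  have hcompl : Tᶜ.card = q - d := by
    rw [Finset.card_compl, hTmem]; simp
  have h1 : (q - d) * ∑ t ∈ T, c.count t ≤ d * ∑ s ∈ Tᶜ, c.count s := by
    calc (q - d) * ∑ t ∈ T, c.count t = ∑ t ∈ T, (q - d) * c.count t := Finset.mul_sum _ _ _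
    _ ≤ ∑ t ∈ T, ∑ s ∈ Tᶜ, c.count s := by
        refine Finset.sum_le_sum fun t ht => ?_
        calc (q - d) * c.count t = ∑ _s ∈ Tᶜ, c.count t := by
              rw [Finset.sum_const, hcompl, smul_eq_mul]
        _ ≤ ∑ s ∈ Tᶜ, c.count s :=
            Finset.sum_le_sum fun s hs => hswap t ht s (Finset.mem_compl.1 hs)
    _ = d * ∑ s ∈ Tᶜ, c.count s := by rw [Finset.sum_const, hTmem, smul_eq_mul]
  have htot : ∑ t ∈ T, c.count t + ∑ s ∈ Tᶜ, c.count s = c.length := by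
    rw [Finset.sum_add_sum_compl]
    rw [sum_count_eq_countP']
    simp [List.countP_eq_length_filter]
  refine ⟨T, hTmem, ?_⟩
  calc q * ∑ t ∈ T, c.count t = (q - d) * ∑ t ∈ T, c.count t + d * ∑ t ∈ T, c.count t := by
        rw [← Nat.add_mul]; rw [Nat.sub_add_cancel hd]
  _ ≤ d * ∑ s ∈ Tᶜ, c.count s + d * ∑ t ∈ T, c.count t := by omega
  _ = d * c.length := by rw [← Nat.mul_add, Nat.add_comm, htot]

lemma count_core (q d m : ℕ) (hq0 : 0 < q)
    (C : Finset (List (Fin q)))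
    (T : List (Fin q) → Finset (Fin q))
    (hTcard : ∀ c, (T c).card = d)
    (y : List (Fin q) → List (Fin q))
    (hylen : ∀ c ∈ C, (y c).length = m)
    (hymem : ∀ c ∈ C, ∀ a ∈ y c, a ∉ T c)
    (hyinj : ∀ c₁ ∈ C, ∀ c₂ ∈ C, y c₁ = y c₂ → c₁ = c₂) :
    C.card ≤ q.choose (q - d) * (q - d) ^ m := by
  classical
  set F : Finset (Finset (Fin q) × (Fin m → Fin q)) :=
    (Finset.univ.powersetCard (q - d)).biUnion
      (fun S => {S} ×ˢ (Fintype.piFinset fun _ : Fin m => S)) with hF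
  have hcard : F.card ≤ q.choose (q - d) * (q - d) ^ m := by
    refine (Finset.card_biUnion_le).trans ?_
    have : ∀ S ∈ Finset.univ.powersetCard (q - d) (α := Fin q),
        ({S} ×ˢ (Fintype.piFinset fun _ : Fin m => S)).card = (q - d) ^ m := by
      intro S hS
      rw [Finset.mem_powersetCard_univ] at hS
      rw [Finset.card_product, Finset.card_singleton, one_mul, Fintype.card_piFinset]
      simp [hS]
    rw [Finset.sum_congr rfl this, Finset.sum_const, Finset.card_powersetCard, smul_eq_mul]
    simp
  refine le_trans ?_ hcard
  apply Finset.card_le_card_of_injOn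
    (fun c => ((T c)ᶜ, fun i : Fin m => (y c).getD i ⟨0, hq0⟩))
  · intro c hc
    show _ ∈ F
    rw [hF]
    simp only [Finset.mem_biUnion]
    refine ⟨(T c)ᶜ, ?_, ?_⟩
    · rw [Finset.mem_powersetCard_univ, Finset.card_compl, hTcard, Fintype.card_fin]
    · rw [Finset.mem_product]
      refine ⟨Finset.mem_singleton_self _, Fintype.mem_piFinset.2 fun i => ?_⟩
      have hi : (i : ℕ) < (y c).length := by rw [hylen c hc]; exact i.isLt
      show (y c).getD i ⟨0, hq0⟩ ∈ (T c)ᶜ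
      rw [List.getD_eq_getElem _ _ hi]
      exact Finset.mem_compl.2 (hymem c hc _ (List.getElem_mem hi))
  · intro c₁ hc₁ c₂ hc₂ hfe
    simp only [Prod.mk.injEq] at hfe
    apply hyinj c₁ hc₁ c₂ hc₂
    apply List.ext_getElem (by rw [hylen c₁ hc₁, hylen c₂ hc₂])
    intro i h₁ h₂
    have hi : i < m := by rwa [hylen c₁ hc₁] at h₁
    have := congrFun hfe.2 ⟨i, hi⟩
    rwa [List.getD_eq_getElem _ _ h₁, List.getD_eq_getElem _ _ h₂] at this

/-- Rate upper bound for unique decoding from a δ-fraction of deletions, with `d = δq`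
an integer, plus the resulting alphabet-size lower bound `q ≥ exp((1-δ)ln(1/(1-δ))/ε)`. -/
theorem stmt5 (q d n : ℕ) (δ : ℝ) (hq : 2 ≤ q) (hn : 0 < n)
    (hδ0 : 0 < δ) (hδ1 : δ < 1) (hd : (d : ℝ) = δ * q)
    (C : Finset (List (Fin q))) (hlen : ∀ c ∈ C, c.length = n)
    (D : List (Fin q) → List (Fin q))
    (hdec : ∀ c ∈ C, ∀ y : List (Fin q),
      y.Sublist c → (n : ℝ) - δ * n ≤ (y.length : ℝ) → D y = c) :
    (C.card : ℝ) ≤ (q.choose (q - d) : ℝ) * ((q - d : ℕ) : ℝ) ^ (n - ⌊δ * n⌋₊)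
    ∧ ∀ ε : ℝ, 0 < ε →
        1 - δ - ε ≤ (1 - δ) * (1 + Real.log (1 - δ) / Real.log q) →
        Real.exp ((1 - δ) * Real.log (1 / (1 - δ)) / ε) ≤ (q : ℝ) := by
  classical
  have hq0 : 0 < q := by omega
  have hqR : (0 : ℝ) < q := by exact_mod_cast hq0
  have hdq : d < q := by
    have : (d : ℝ) < q := by rw [hd]; nlinarith
    exact_mod_cast this
  have hδn : δ * n ≤ n := by nlinarith [Nat.cast_nonneg (α := ℝ) n]
  have hfl : ⌊δ * n⌋₊ ≤ n := by
    calc ⌊δ * n⌋₊ ≤ ⌊(n : ℝ)⌋₊ := Nat.floor_le_floor hδn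
    _ = n := Nat.floor_natCast n
  set m : ℕ := n - ⌊δ * n⌋₊ with hm
  have hmR : ((n : ℝ) - δ * n) ≤ m := by
    have h1 : (m : ℝ) = (n : ℝ) - (⌊δ * n⌋₊ : ℝ) := by
      rw [hm, Nat.cast_sub hfl]
    have h2 : (⌊δ * n⌋₊ : ℝ) ≤ δ * n := Nat.floor_le (by positivity)
    linarith
  set T : List (Fin q) → Finset (Fin q) := fun c => (exists_minT d hdq.le c).choose with hT
  have hTspec : ∀ c, (T c).card = d ∧ q * (∑ t ∈ T c, c.count t) ≤ d * c.length :=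
    fun c => (exists_minT d hdq.le c).choose_spec
  set y : List (Fin q) → List (Fin q) :=
    fun c => (c.filter (fun a => ¬ a ∈ T c)).take m with hy
  have hflen : ∀ c ∈ C, m ≤ (c.filter (fun a => ¬ a ∈ T c)).length := by
    intro c hc
    have hcl := hlen c hc
    have hsum : ∑ t ∈ T c, c.count t ≤ ⌊δ * n⌋₊ := by
      apply Nat.le_floor
      have h1 : (q : ℝ) * (∑ t ∈ T c, c.count t) ≤ (d : ℝ) * n := by
        have := (hTspec c).2
        rw [hcl] at this
        exact_mod_cast this
      rw [hd] at h1
      nlinarith [Nat.cast_nonneg (α := ℝ) (∑ t ∈ T c, c.count t)]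
    have h2 : (c.filter (fun a => a ∈ T c)).length = ∑ t ∈ T c, c.count t := by
      rw [sum_count_eq_countP', List.countP_eq_length_filter]
    have h3 := length_filter_add_not (fun a => a ∈ T c) c
    omega
  have hylen : ∀ c ∈ C, (y c).length = m := by
    intro c hc
    rw [hy]
    simp only [List.length_take]
    exact min_eq_left (hflen c hc)
  have hymem : ∀ c ∈ C, ∀ a ∈ y c, a ∉ T c := by
    intro c hc a ha
    rw [hy] at ha
    have := (List.take_sublist _ _).mem ha
    simpa using (List.mem_filter.1 this).2
  have hsub : ∀ c, (y c).Sublist c := by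
    intro c
    exact (List.take_sublist _ _).trans List.filter_sublist
  have hyinj : ∀ c₁ ∈ C, ∀ c₂ ∈ C, y c₁ = y c₂ → c₁ = c₂ := by
    intro c₁ hc₁ c₂ hc₂ he
    have hlb : ∀ c ∈ C, (n : ℝ) - δ * n ≤ ((y c).length : ℝ) := by
      intro c hc
      rw [hylen c hc]
      exact hmR
    have e1 : D (y c₁) = c₁ := hdec c₁ hc₁ _ (hsub c₁) (hlb c₁ hc₁)
    have e2 : D (y c₂) = c₂ := hdec c₂ hc₂ _ (hsub c₂) (hlb c₂ hc₂)
    rw [← e1, ← e2, he]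
  have hmain : C.card ≤ q.choose (q - d) * (q - d) ^ m :=
    count_core q d m hq0 C T (fun c => (hTspec c).1) y hylen hymem hyinj
  constructor
  · calc (C.card : ℝ) ≤ (q.choose (q - d) * (q - d) ^ m : ℕ) := by exact_mod_cast hmain
    _ = (q.choose (q - d) : ℝ) * ((q - d : ℕ) : ℝ) ^ (n - ⌊δ * n⌋₊) := by
        rw [hm]; push_cast; ring
  · intro ε hε h
    have hq1 : (1 : ℝ) < q := by exact_mod_cast hq.trans_lt' one_lt_two
    have hlq : 0 < Real.log q := Real.log_pos hq1
    have h1δ : 0 < 1 - δ := by linarith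
    have h2 : -ε ≤ (1 - δ) * Real.log (1 - δ) / Real.log q := by
      rw [mul_div_assoc]; nlinarith
    have h3 : -ε * Real.log q ≤ (1 - δ) * Real.log (1 - δ) := by
      have := mul_le_mul_of_nonneg_right h2 hlq.le
      rwa [div_mul_cancel₀ _ hlq.ne'] at this
    have h4 : (1 - δ) * Real.log (1 / (1 - δ)) ≤ ε * Real.log q := by
      rw [one_div, Real.log_inv]; nlinarith
    have h5 : (1 - δ) * Real.log (1 / (1 - δ)) / ε ≤ Real.log q := by
      rw [div_le_iff₀ hε]; nlinarith
    calc Real.exp ((1 - δ) * Real.log (1 / (1 - δ)) / ε) ≤ Real.exp (Real.log q) :=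
          Real.exp_le_exp.2 h5
    _ = q := Real.exp_log (by linarith)
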